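/- The function g(c) = (2 + c^(4/3))^(3/4) / sqrt(4 + c²) on (0,∞) attains maximum value 6^(3/4)/(2√3) = (2+4)^(3/4)/sqrt(12) at c = 2^(3/2), and hence D(2) ≥ 6^(3/4)/(2√3) > 1.10. -/

import Mathlib

theorem key_bound (c : ℝ) (a b : ℂ) (ha : ‖a‖ ≤ 1) (hb : ‖b‖ ≤ 1) :
    ‖a^2 - b^2 + (c:ℂ) * a * b‖ ≤ Real.sqrt (4 + c^2) := by
  apply Real.le_sqrt_of_sq_le
  have hsq : ‖a^2 - b^2 + (c:ℂ) * a * b‖^2 = Complex.normSq (a^2 - b^2 + (c:ℂ) * a * b) := by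
    rw [← Complex.sq_norm]
  rw [hsq]
  have ha2 : ‖a‖ ≤ 1 := ha
  have hb2 : ‖b‖ ≤ 1 := hb
  have ha' : a.re^2 + a.im^2 ≤ 1 := by
    have := Complex.sq_norm a
    rw [Complex.normSq_apply] at this
    nlinarith [norm_nonneg a]
  have hb' : b.re^2 + b.im^2 ≤ 1 := by
    have := Complex.sq_norm b
    rw [Complex.normSq_apply] at this
    nlinarith [norm_nonneg b]
  simp only [Complex.normSq_apply, Complex.add_re, Complex.add_im, Complex.sub_re,
    Complex.sub_im, Complex.mul_re, Complex.mul_im, Complex.ofReal_re, Complex.ofReal_im,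
    pow_two]
  ring_nf
  nlinarith [sq_nonneg (4*(a.re*b.re + a.im*b.im) - c*((a.re^2+a.im^2)-(b.re^2+b.im^2))),
    mul_nonneg (by nlinarith : (0:ℝ) ≤ 2 - (a.re^2+a.im^2) - (b.re^2+b.im^2))
      (by positivity : (0:ℝ) ≤ (2 + (a.re^2+a.im^2) + (b.re^2+b.im^2)) * (4 + c^2)),
    sq_nonneg (a.re*b.im - a.im*b.re)]


theorem part1 :
    IsMaxOn
      (fun c : ℝ => (2 + c ^ ((4:ℝ) / 3)) ^ ((3:ℝ) / 4) / Real.sqrt (4 + c ^ 2))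
      (Set.Ioi (0:ℝ)) ((2:ℝ) ^ ((3:ℝ) / 2)) := by
  intro c hc
  simp only [Set.mem_setOf_eq, Set.mem_Ioi] at *
  have hc0 : (0:ℝ) < c := hc
  have h1 : ((2:ℝ) ^ ((3:ℝ)/2)) ^ ((4:ℝ)/3) = 4 := by
    rw [← Real.rpow_mul (by norm_num)]; norm_num
  have h2 : ((2:ℝ) ^ ((3:ℝ)/2)) ^ (2:ℕ) = 8 := by
    rw [← Real.rpow_natCast (((2:ℝ) ^ ((3:ℝ)/2))) 2, ← Real.rpow_mul (by norm_num)]; norm_num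
  rw [h1, h2]
  set t : ℝ := c ^ ((2:ℝ)/3) with ht
  have ht0 : 0 < t := Real.rpow_pos_of_pos hc0 _
  have e1 : c ^ ((4:ℝ)/3) = t ^ (2:ℕ) := by
    rw [ht, ← Real.rpow_natCast (c ^ ((2:ℝ)/3)) 2, ← Real.rpow_mul hc0.le]; norm_num
  have e2 : c ^ (2:ℕ) = t ^ (3:ℕ) := by
    rw [ht, ← Real.rpow_natCast (c ^ ((2:ℝ)/3)) 3, ← Real.rpow_mul hc0.le,
      ← Real.rpow_natCast c 2]; norm_num
  rw [e1, e2]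
  have hA : (0:ℝ) ≤ (2 + t^(2:ℕ)) ^ ((3:ℝ)/4) := by positivity
  have hB : (0:ℝ) < Real.sqrt (4 + t^(3:ℕ)) := Real.sqrt_pos.2 (by positivity)
  have hD : (0:ℝ) < Real.sqrt (4 + 8:ℝ) := Real.sqrt_pos.2 (by norm_num)
  rw [div_le_div_iff₀ hB hD]
  apply le_of_pow_le_pow_left₀ (n := 4) (by norm_num) (by positivity)
  have k1 : ((2 + t^(2:ℕ)) ^ ((3:ℝ)/4)) ^ (4:ℕ) = (2 + t^(2:ℕ)) ^ (3:ℕ) := by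
    rw [← Real.rpow_natCast ((2 + t^(2:ℕ)) ^ ((3:ℝ)/4)) 4, ← Real.rpow_mul (by positivity)]
    norm_num
  have k2 : (((2:ℝ)+4) ^ ((3:ℝ)/4)) ^ (4:ℕ) = 216 := by
    rw [← Real.rpow_natCast (((2:ℝ)+4) ^ ((3:ℝ)/4)) 4, ← Real.rpow_mul (by norm_num)]
    norm_num
  have k3 : (Real.sqrt (4 + 8:ℝ)) ^ (4:ℕ) = 144 := by
    rw [show (4:ℕ) = 2*2 from rfl, pow_mul, Real.sq_sqrt (by norm_num)]; norm_num
  have k4 : (Real.sqrt (4 + t^(3:ℕ))) ^ (4:ℕ) = (4 + t^(3:ℕ))^(2:ℕ) := by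
    rw [show (4:ℕ) = 2*2 from rfl, pow_mul, Real.sq_sqrt (by positivity)]
  rw [mul_pow, mul_pow, k1, k2, k3, k4]
  nlinarith [mul_nonneg (sq_nonneg (t-2)) (by positivity : (0:ℝ) ≤ t^4+4*t^3+8*t+8), ht0.le, sq_nonneg t]


theorem part4 : (1.10 : ℝ) < (6:ℝ) ^ ((3:ℝ) / 4) / (2 * Real.sqrt 3) := by
  have hs : Real.sqrt 3 < 1.7321 := by
    rw [show (1.7321:ℝ) = Real.sqrt (1.7321^2) by rw [Real.sqrt_sq (by norm_num)]]
    exact Real.sqrt_lt_sqrt (by norm_num) (by norm_num)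
  have hs0 : (0:ℝ) < Real.sqrt 3 := Real.sqrt_pos.2 (by norm_num)
  have h6 : (3.82:ℝ) ≤ (6:ℝ) ^ ((3:ℝ)/4) := by
    have : ((3.82:ℝ) ^ (4:ℕ)) ^ ((1:ℝ)/4) ≤ ((6:ℝ)^(3:ℕ)) ^ ((1:ℝ)/4) := by
      apply Real.rpow_le_rpow (by positivity) (by norm_num) (by norm_num)
    rw [← Real.rpow_natCast (3.82:ℝ) 4, ← Real.rpow_natCast (6:ℝ) 3,
      ← Real.rpow_mul (by norm_num), ← Real.rpow_mul (by norm_num)] at this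
    norm_num at this
    convert this using 2
    norm_num
  rw [lt_div_iff₀ (by positivity)]
  nlinarith


noncomputable section
open Finsupp

def cc : ℝ := (2:ℝ) ^ ((3:ℝ)/2)

def A1 : Fin 2 →₀ ℕ := Finsupp.single 0 2
def A2 : Fin 2 →₀ ℕ := Finsupp.single 1 2
def A3 : Fin 2 →₀ ℕ := Finsupp.single 0 1 + Finsupp.single 1 1

def aa : (Fin 2 →₀ ℕ) →₀ ℂ :=
  Finsupp.single A1 1 + Finsupp.single A2 (-1) + Finsupp.single A3 (cc:ℂ)

lemma cc_pos : 0 < cc := Real.rpow_pos_of_pos (by norm_num) _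

lemma h12 : A1 ≠ A2 := by
  intro h
  have := DFunLike.congr_fun h (0 : Fin 2)
  simp [A1, A2, Finsupp.single_apply] at this

lemma h13 : A1 ≠ A3 := by
  intro h
  have := DFunLike.congr_fun h (0 : Fin 2)
  simp [A1, A3, Finsupp.single_apply] at this

lemma h23 : A2 ≠ A3 := by
  intro h
  have := DFunLike.congr_fun h (1 : Fin 2)
  simp [A2, A3, Finsupp.single_apply] at this

lemma aa_A1 : aa A1 = 1 := by
  simp [aa, Finsupp.single_apply, h12, h13, h12.symm, h13.symm]

lemma aa_A2 : aa A2 = -1 := by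
  simp [aa, Finsupp.single_apply, h12, h23.symm]

lemma aa_A3 : aa A3 = (cc:ℂ) := by
  simp [aa, Finsupp.single_apply, h13, h23]

lemma aa_supp : aa.support = {A1, A2, A3} := by
  have hc : (cc:ℂ) ≠ 0 := by exact_mod_cast cc_pos.ne'
  apply Finset.Subset.antisymm
  · intro x hx
    have h := Finsupp.mem_support_iff.1 hx
    by_contra hmem
    simp only [Finset.mem_insert, Finset.mem_singleton, not_or] at hmem
    obtain ⟨n1, n2, n3⟩ := hmem
    exact h (by simp [aa, Finsupp.single_apply, Ne.symm n1, Ne.symm n2, Ne.symm n3])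
  · intro x hx
    simp only [Finset.mem_insert, Finset.mem_singleton] at hx
    rcases hx with rfl | rfl | rfl
    · exact Finsupp.mem_support_iff.2 (by rw [aa_A1]; norm_num)
    · exact Finsupp.mem_support_iff.2 (by rw [aa_A2]; norm_num)
    · exact Finsupp.mem_support_iff.2 (by rw [aa_A3]; exact hc)
end

noncomputable section
open Finsupp

lemma deg_all : ∀ α ∈ aa.support, (α.sum fun _ k => k) = 2 := by
  intro α hα
  rw [aa_supp] at hα
  simp only [Finset.mem_insert, Finset.mem_singleton] at hα
  rcases hα with rfl | rfl | rfl
  · simp [A1, Finsupp.sum_single_index]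
  · simp [A2, Finsupp.sum_single_index]
  · simp [A3, Finsupp.sum_add_index', Finsupp.sum_single_index]

lemma cc43 : cc ^ ((4:ℝ)/3) = 4 := by
  rw [cc, ← Real.rpow_mul (by norm_num)]; norm_num

lemma cc_sq : cc ^ (2:ℕ) = 8 := by
  rw [cc, ← Real.rpow_natCast ((2:ℝ) ^ ((3:ℝ)/2)) 2, ← Real.rpow_mul (by norm_num)]; norm_num

lemma coeff_sum : (∑ α ∈ aa.support, ‖aa α‖ ^ ((4:ℝ)/3)) = 6 := by
  rw [aa_supp, Finset.sum_insert (by simp [h12, h13]),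
    Finset.sum_insert (by simp [h23]), Finset.sum_singleton, aa_A1, aa_A2, aa_A3]
  have : ‖((cc:ℝ):ℂ)‖ = cc := by
    rw [Complex.norm_real, Real.norm_of_nonneg cc_pos.le]
  rw [this, cc43]
  norm_num [Real.one_rpow]

lemma A1v0 : A1 (0:Fin 2) = 2 := by simp [A1]
lemma A1v1 : A1 (1:Fin 2) = 0 := by simp [A1, Finsupp.single_apply]
lemma A2v0 : A2 (0:Fin 2) = 0 := by simp [A2, Finsupp.single_apply]
lemma A2v1 : A2 (1:Fin 2) = 2 := by simp [A2]
lemma A3v0 : A3 (0:Fin 2) = 1 := by simp [A3, Finsupp.single_apply]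
lemma A3v1 : A3 (1:Fin 2) = 1 := by simp [A3, Finsupp.single_apply]

lemma eval_sum (z : Fin 2 → ℂ) :
    ∑ α ∈ aa.support, aa α * ∏ i, z i ^ α i
      = (z 0)^2 - (z 1)^2 + (cc:ℂ) * z 0 * z 1 := by
  rw [aa_supp, Finset.sum_insert (by simp [h12, h13]),
    Finset.sum_insert (by simp [h23]), Finset.sum_singleton, aa_A1, aa_A2, aa_A3]
  simp only [Fin.prod_univ_two, A1v0, A1v1, A2v0, A2v1, A3v0, A3v1]
  ring


theorem part3 : ∀ D : ℝ,
      (∀ (N : ℕ) (a : (Fin N →₀ ℕ) →₀ ℂ),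
        (∀ α ∈ a.support, (α.sum fun _ k => k) = 2) →
        (∑ α ∈ a.support, ‖a α‖ ^ ((4:ℝ) / 3)) ^ ((3:ℝ) / 4) ≤
          D * sSup {y : ℝ | ∃ z : Fin N → ℂ, (∀ i, ‖z i‖ ≤ 1) ∧
            y = ‖∑ α ∈ a.support, a α * ∏ i, z i ^ α i‖}) →
      (6:ℝ) ^ ((3:ℝ) / 4) / (2 * Real.sqrt 3) ≤ D := by
  intro D h
  have hb := h 2 aa deg_all
  rw [coeff_sum] at hb
  set S := {y : ℝ | ∃ z : Fin 2 → ℂ, (∀ i, ‖z i‖ ≤ 1) ∧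
      y = ‖∑ α ∈ aa.support, aa α * ∏ i, z i ^ α i‖} with hS
  have hub : ∀ y ∈ S, y ≤ 2 * Real.sqrt 3 := by
    rintro y ⟨z, hz, rfl⟩
    rw [eval_sum]
    calc ‖(z 0)^2 - (z 1)^2 + (cc:ℂ) * z 0 * z 1‖ ≤ Real.sqrt (4 + cc^2) :=
          key_bound cc (z 0) (z 1) (hz 0) (hz 1)
      _ = 2 * Real.sqrt 3 := by
          rw [cc_sq]
          rw [show (4:ℝ) + 8 = 2^2 * 3 by norm_num, Real.sqrt_mul (by positivity),
            Real.sqrt_sq (by norm_num)]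
  have hne : S.Nonempty := ⟨_, ⟨fun _ => 0, fun i => by simp, rfl⟩⟩
  have hbdd : BddAbove S := ⟨2 * Real.sqrt 3, hub⟩
  have hM : sSup S ≤ 2 * Real.sqrt 3 := csSup_le hne hub
  obtain ⟨y0, hy0⟩ := hne
  have hy0' : 0 ≤ y0 := by obtain ⟨z, hz, rfl⟩ := hy0; positivity
  have h0M : 0 ≤ sSup S := le_trans hy0' (le_csSup hbdd hy0)
  have h6 : (0:ℝ) < (6:ℝ) ^ ((3:ℝ)/4) := by positivity
  have hD : 0 < D := by
    by_contra hD
    push_neg at hD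
    nlinarith [mul_nonpos_of_nonpos_of_nonneg hD h0M]
  rw [div_le_iff₀ (by positivity)]
  calc (6:ℝ) ^ ((3:ℝ)/4) ≤ D * sSup S := hb
    _ ≤ D * (2 * Real.sqrt 3) := mul_le_mul_of_nonneg_left hM hD.le


theorem stmt_15 :
    IsMaxOn
      (fun c : ℝ => (2 + c ^ ((4:ℝ) / 3)) ^ ((3:ℝ) / 4) / Real.sqrt (4 + c ^ 2))
      (Set.Ioi (0:ℝ)) ((2:ℝ) ^ ((3:ℝ) / 2)) ∧
    (2 + ((2:ℝ) ^ ((3:ℝ) / 2)) ^ ((4:ℝ) / 3)) ^ ((3:ℝ) / 4) /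
        Real.sqrt (4 + ((2:ℝ) ^ ((3:ℝ) / 2)) ^ 2) =
      (6:ℝ) ^ ((3:ℝ) / 4) / (2 * Real.sqrt 3) ∧
    (∀ D : ℝ,
      (∀ (N : ℕ) (a : (Fin N →₀ ℕ) →₀ ℂ),
        (∀ α ∈ a.support, (α.sum fun _ k => k) = 2) →
        (∑ α ∈ a.support, ‖a α‖ ^ ((4:ℝ) / 3)) ^ ((3:ℝ) / 4) ≤
          D * sSup {y : ℝ | ∃ z : Fin N → ℂ, (∀ i, ‖z i‖ ≤ 1) ∧
            y = ‖∑ α ∈ a.support, a α * ∏ i, z i ^ α i‖}) →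
      (6:ℝ) ^ ((3:ℝ) / 4) / (2 * Real.sqrt 3) ≤ D) ∧
    (1.10 : ℝ) < (6:ℝ) ^ ((3:ℝ) / 4) / (2 * Real.sqrt 3) := by
  refine ⟨part1, ?_, part3, part4⟩
  have h1 : ((2:ℝ) ^ ((3:ℝ)/2)) ^ ((4:ℝ)/3) = 4 := by
    rw [← Real.rpow_mul (by norm_num)]; norm_num
  have h2 : ((2:ℝ) ^ ((3:ℝ)/2)) ^ (2:ℕ) = 8 := by
    rw [← Real.rpow_natCast (((2:ℝ) ^ ((3:ℝ)/2))) 2, ← Real.rpow_mul (by norm_num)]; norm_num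
  rw [h1, h2]
  norm_num
  rw [show (12:ℝ) = 2^2 * 3 by norm_num, Real.sqrt_mul (by positivity), Real.sqrt_sq (by norm_num)]
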